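/- If the Lasserre hierarchy for the convex program min{f(x) : gᵢ(x) ≤ 0, i=1,…,m} has finite convergence, i.e., f − f* = σ₀ − Σᵢ σᵢgᵢ + σ(c − f) for some sums of squares σ, σ₀, σ₁,…,σ_m and some c > f*, then for every minimizer x* of f over K there exists λ* ∈ ℝ₊^m such that (x*, λ*) is a saddle-point of the Lagrangian L(x,λ) = f(x) + Σᵢ λᵢgᵢ(x). -/

import Mathlib

/-- A multivariate polynomial is a sum of squares. -/
def IsSOS {n : ℕ} (p : MvPolynomial (Fin n) ℝ) : Prop :=
  ∃ (k : ℕ) (q : Fin k → MvPolynomial (Fin n) ℝ), p = ∑ j, (q j) ^ 2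

lemma isSOS_nonneg {n : ℕ} {p : MvPolynomial (Fin n) ℝ} (h : IsSOS p)
    (x : Fin n → ℝ) : 0 ≤ MvPolynomial.eval x p := by
  obtain ⟨k, q, rfl⟩ := h
  simp only [map_sum, map_pow]
  exact Finset.sum_nonneg fun j _ => sq_nonneg _

lemma line_poly {n : ℕ} (p : MvPolynomial (Fin n) ℝ) (xs d : Fin n → ℝ) :
    ∃ P : Polynomial ℝ, ∀ t : ℝ,
      P.eval t = MvPolynomial.eval (fun i => xs i + t * d i) p := by
  refine ⟨MvPolynomial.aeval (fun i => Polynomial.C (xs i) + Polynomial.C (d i) * Polynomial.X) p,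
    fun t => ?_⟩
  induction p using MvPolynomial.induction_on with
  | C a => simp
  | add p q hp hq => simp [hp, hq]
  | mul_X p i hp =>
      simp only [map_mul, MvPolynomial.aeval_X, MvPolynomial.eval_X, Polynomial.eval_mul,
        Polynomial.eval_add, Polynomial.eval_C, Polynomial.eval_X, hp]
      ring

lemma poly_linear_bound (P : Polynomial ℝ) (h0 : P.eval 0 = 0) :
    ∃ C : ℝ, 0 ≤ C ∧ ∀ t : ℝ, |t| ≤ 1 → |P.eval t| ≤ C * |t| := by
  have hdvd : Polynomial.X ∣ P := by
    rw [Polynomial.X_dvd_iff, Polynomial.coeff_zero_eq_eval_zero, h0]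
  obtain ⟨Q, rfl⟩ := hdvd
  obtain ⟨C, hC⟩ := (isCompact_Icc (a := (-1:ℝ)) (b := 1)).exists_bound_of_continuousOn
      (Polynomial.continuous Q).continuousOn
  refine ⟨C, le_trans (norm_nonneg _) (hC 0 (by norm_num)), fun t ht => ?_⟩
  have hQ : |Q.eval t| ≤ C := hC t (abs_le.mp ht)
  calc |((Polynomial.X * Q).eval t)| = |Q.eval t| * |t| := by
        simp [Polynomial.eval_mul, abs_mul]; ring
    _ ≤ C * |t| := mul_le_mul_of_nonneg_right hQ (abs_nonneg t)

/-- Finite convergence of the Lasserre hierarchy implies existence of a saddle-point of the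
Lagrangian at every minimizer. -/
theorem finite_convergence_implies_saddle_point {n m : ℕ}
    (pf : MvPolynomial (Fin n) ℝ) (pg : Fin m → MvPolynomial (Fin n) ℝ)
    (hfc : ConvexOn ℝ Set.univ fun x : Fin n → ℝ => MvPolynomial.eval x pf)
    (hgc : ∀ i, ConvexOn ℝ Set.univ fun x : Fin n → ℝ => MvPolynomial.eval x (pg i))
    (K : Set (Fin n → ℝ)) (hK : K = {x | ∀ i, MvPolynomial.eval x (pg i) ≤ 0})
    (hKne : K.Nonempty)
    (fstar : ℝ) (xs : Fin n → ℝ) (hxs : xs ∈ K)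
    (hfstar : fstar = MvPolynomial.eval xs pf)
    (hmin : ∀ x ∈ K, fstar ≤ MvPolynomial.eval x pf)
    (hconv : ∃ (c : ℝ), fstar < c ∧
      ∃ (σ σ₀ : MvPolynomial (Fin n) ℝ) (σs : Fin m → MvPolynomial (Fin n) ℝ),
        IsSOS σ ∧ IsSOS σ₀ ∧ (∀ i, IsSOS (σs i)) ∧
        pf - MvPolynomial.C fstar
          = σ₀ - (∑ i, σs i * pg i) + σ * (MvPolynomial.C c - pf)) :
    ∃ lams : Fin m → ℝ, (∀ i, 0 ≤ lams i) ∧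
      (∀ x : Fin n → ℝ,
        MvPolynomial.eval x pf + ∑ i, lams i * MvPolynomial.eval x (pg i)
          ≥ MvPolynomial.eval xs pf + ∑ i, lams i * MvPolynomial.eval xs (pg i)) ∧
      (∀ lam : Fin m → ℝ, (∀ i, 0 ≤ lam i) →
        MvPolynomial.eval xs pf + ∑ i, lams i * MvPolynomial.eval xs (pg i)
          ≥ MvPolynomial.eval xs pf + ∑ i, lam i * MvPolynomial.eval xs (pg i)) := by
  classical
  obtain ⟨c, hc, σ, σ₀, σs, hσ, hσ₀, hσs, hid⟩ := hconv
  -- evaluated identity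
  have key : ∀ y : Fin n → ℝ,
      MvPolynomial.eval y pf - fstar
        = MvPolynomial.eval y σ₀
            - (∑ i, MvPolynomial.eval y (σs i) * MvPolynomial.eval y (pg i))
            + MvPolynomial.eval y σ * (c - MvPolynomial.eval y pf) := by
    intro y
    have h := congrArg (MvPolynomial.eval y) hid
    simpa [map_sum] using h
  have hgxs : ∀ i, MvPolynomial.eval xs (pg i) ≤ 0 := by
    rw [hK] at hxs; exact hxs
  -- complementarity
  have hterm : ∀ i, MvPolynomial.eval xs (σs i) * MvPolynomial.eval xs (pg i) = 0 := by
    have hkxs := key xs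
    have hA : 0 ≤ MvPolynomial.eval xs σ₀ := isSOS_nonneg hσ₀ xs
    have hB : 0 ≤ MvPolynomial.eval xs σ * (c - MvPolynomial.eval xs pf) := by
      apply mul_nonneg (isSOS_nonneg hσ xs)
      rw [← hfstar]; linarith
    have hle : ∀ i ∈ Finset.univ,
        MvPolynomial.eval xs (σs i) * MvPolynomial.eval xs (pg i) ≤ 0 :=
      fun i _ => mul_nonpos_of_nonneg_of_nonpos (isSOS_nonneg (hσs i) xs) (hgxs i)
    have hsum0 : ∑ i, MvPolynomial.eval xs (σs i) * MvPolynomial.eval xs (pg i) = 0 := by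
      have h1 : ∑ i, MvPolynomial.eval xs (σs i) * MvPolynomial.eval xs (pg i) ≤ 0 :=
        Finset.sum_nonpos hle
      have h2 : MvPolynomial.eval xs pf - fstar = 0 := by rw [hfstar]; ring
      linarith
    have := (Finset.sum_eq_zero_iff_of_nonneg
        (f := fun i => -(MvPolynomial.eval xs (σs i) * MvPolynomial.eval xs (pg i)))
        (s := Finset.univ) (fun i hi => by simpa using hle i hi)).mp
        (by rw [Finset.sum_neg_distrib, hsum0, neg_zero])
    intro i
    have := this i (Finset.mem_univ i)
    linarith
  set lams : Fin m → ℝ := fun i => MvPolynomial.eval xs (σs i) with hlams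
  have hlamnn : ∀ i, 0 ≤ lams i := fun i => isSOS_nonneg (hσs i) xs
  have hsumlam : ∑ i, lams i * MvPolynomial.eval xs (pg i) = 0 :=
    Finset.sum_eq_zero fun i _ => hterm i
  refine ⟨lams, hlamnn, ?_, ?_⟩
  · -- main saddle inequality
    intro x
    set d : Fin n → ℝ := fun i => x i - xs i with hd
    obtain ⟨Pf, hPf⟩ := line_poly pf xs d
    choose Pg hPg using fun i => line_poly (pg i) xs d
    choose Ps hPs using fun i => line_poly (σs i) xs d
    set xt : ℝ → (Fin n → ℝ) := fun t i => xs i + t * d i with hxt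
    set l : Filter ℝ := nhdsWithin 0 (Set.Ioi 0) with hl
    -- per-i eventual lower bound
    have piece : ∀ i : Fin m, ∃ C : ℝ, ∀ᶠ t in l,
        -(C * t ^ 2) ≤ (lams i - MvPolynomial.eval (xt t) (σs i))
          * MvPolynomial.eval (xt t) (pg i) := by
      intro i
      rcases lt_or_eq_of_le (hgxs i) with hlt | heq
      · -- inactive constraint: lams i = 0 and g_i < 0 near 0
        have hlam0 : lams i = 0 := by
          rcases mul_eq_zero.mp (hterm i) with h | h
          · exact h
          · exact absurd h (ne_of_lt hlt)
        refine ⟨0, ?_⟩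
        have hcont : Filter.Tendsto (fun t => (Pg i).eval t) (nhds 0) (nhds ((Pg i).eval 0)) :=
          (Polynomial.continuous (Pg i)).tendsto 0
        have h0 : (Pg i).eval 0 = MvPolynomial.eval xs (pg i) := by
          rw [hPg i 0]; simp
        have hev : ∀ᶠ t in nhds (0:ℝ), (Pg i).eval t < 0 := by
          apply hcont.eventually_lt_const; rw [h0]; exact hlt
        filter_upwards [hev.filter_mono nhdsWithin_le_nhds] with t ht
        have hgt : MvPolynomial.eval (xt t) (pg i) < 0 := by rw [← hPg]; exact ht
        have hsnn : 0 ≤ MvPolynomial.eval (xt t) (σs i) := isSOS_nonneg (hσs i) _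
        nlinarith [hlam0]
      · -- active constraint: quadratic bound
        have hu0 : (Polynomial.C (lams i) - Ps i).eval 0 = 0 := by
          have : (Ps i).eval 0 = MvPolynomial.eval xs (σs i) := by
            rw [hPs i 0]; simp
          simp [this, hlams]
        have hv0 : (Pg i).eval 0 = 0 := by
          have : (Pg i).eval 0 = MvPolynomial.eval xs (pg i) := by
            rw [hPg i 0]; simp
          rw [this, ← heq]
        obtain ⟨Cu, hCu0, hCu⟩ := poly_linear_bound _ hu0
        obtain ⟨Cv, hCv0, hCv⟩ := poly_linear_bound _ hv0
        refine ⟨Cu * Cv, ?_⟩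
        have hsmall : ∀ᶠ t in l, |t| ≤ 1 := by
          have := eventually_abs_sub_lt (0:ℝ) (one_pos)
          filter_upwards [this.filter_mono nhdsWithin_le_nhds] with t ht
          simpa using le_of_lt (by simpa using ht)
        filter_upwards [hsmall] with t ht
        have hu := hCu t ht
        have hv := hCv t ht
        have habs : |(lams i - MvPolynomial.eval (xt t) (σs i))
            * MvPolynomial.eval (xt t) (pg i)| ≤ (Cu * Cv) * t ^ 2 := by
          have e1 : lams i - MvPolynomial.eval (xt t) (σs i)
              = (Polynomial.C (lams i) - Ps i).eval t := by
            simp [hPs]; rfl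
          have e2 : MvPolynomial.eval (xt t) (pg i) = (Pg i).eval t := (hPg i t).symm
          rw [e1, e2, abs_mul]
          calc |(Polynomial.C (lams i) - Ps i).eval t| * |(Pg i).eval t|
              ≤ (Cu * |t|) * (Cv * |t|) := by
                apply mul_le_mul hu hv (abs_nonneg _)
                positivity
            _ = (Cu * Cv) * t ^ 2 := by rw [← sq_abs t]; ring
        linarith [neg_abs_le ((lams i - MvPolynomial.eval (xt t) (σs i))
            * MvPolynomial.eval (xt t) (pg i)), habs]
    choose Cs hCs using piece
    set C : ℝ := ∑ i, Cs i with hC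
    -- eventual positivity of the sigma * (c - f) term
    have hAev : ∀ᶠ t in l, 0 ≤ MvPolynomial.eval (xt t) σ
        * (c - MvPolynomial.eval (xt t) pf) := by
      have hf0 : Pf.eval 0 = fstar := by
        have : Pf.eval 0 = MvPolynomial.eval xs pf := by rw [hPf 0]; simp
        rw [this, hfstar]
      have hcont : Filter.Tendsto (fun t => Pf.eval t) (nhds 0) (nhds fstar) := by
        rw [← hf0]; exact (Polynomial.continuous Pf).tendsto 0
      have hev : ∀ᶠ t in nhds (0:ℝ), Pf.eval t < c := hcont.eventually_lt_const hc
      filter_upwards [hev.filter_mono nhdsWithin_le_nhds] with t ht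
      apply mul_nonneg (isSOS_nonneg hσ _)
      rw [← hPf]; linarith
    -- eventual lower bound on the Lagrangian along the line
    have hlow : ∀ᶠ t in l, -(C * t ^ 2)
        ≤ MvPolynomial.eval (xt t) pf - fstar
          + ∑ i, lams i * MvPolynomial.eval (xt t) (pg i) := by
      have hall : ∀ᶠ t in l, ∀ i : Fin m, -(Cs i * t ^ 2)
          ≤ (lams i - MvPolynomial.eval (xt t) (σs i)) * MvPolynomial.eval (xt t) (pg i) :=
        Filter.eventually_all.mpr hCs
      filter_upwards [hall, hAev] with t ht hA
      have hsum : ∑ i, -(Cs i * t ^ 2)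
          ≤ ∑ i, (lams i - MvPolynomial.eval (xt t) (σs i)) * MvPolynomial.eval (xt t) (pg i) :=
        Finset.sum_le_sum fun i _ => ht i
      have hre : ∑ i, (lams i - MvPolynomial.eval (xt t) (σs i)) * MvPolynomial.eval (xt t) (pg i)
          = ∑ i, lams i * MvPolynomial.eval (xt t) (pg i)
            - ∑ i, MvPolynomial.eval (xt t) (σs i) * MvPolynomial.eval (xt t) (pg i) := by
        rw [← Finset.sum_sub_distrib]
        exact Finset.sum_congr rfl fun i _ => by ring
      have hkt := key (xt t)
      have hσ₀nn : 0 ≤ MvPolynomial.eval (xt t) σ₀ := isSOS_nonneg hσ₀ _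
      have hsC : ∑ i, -(Cs i * t ^ 2) = -(C * t ^ 2) := by
        rw [Finset.sum_neg_distrib, hC, Finset.sum_mul]
      rw [hsC, hre] at hsum
      linarith
    -- convexity of the Lagrangian
    have hLconv : ConvexOn ℝ Set.univ
        (fun y : Fin n → ℝ => MvPolynomial.eval y pf
          + ∑ i, lams i * MvPolynomial.eval y (pg i)) := by
      have hsum : ∀ s : Finset (Fin m), ConvexOn ℝ Set.univ
          (fun y : Fin n → ℝ => ∑ i ∈ s, lams i * MvPolynomial.eval y (pg i)) := by
        intro s
        induction s using Finset.induction with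
        | empty => simpa using convexOn_const (0:ℝ) convex_univ
        | @insert _ _ hnm ih =>
            simp only [Finset.sum_insert hnm]
            exact (((hgc _).smul (hlamnn _)).add ih)
      exact hfc.add (hsum Finset.univ)
    -- combine: eventually -(C) * t ≤ L x - fstar
    set Lx : ℝ := MvPolynomial.eval x pf + ∑ i, lams i * MvPolynomial.eval x (pg i) with hLx
    have hfinal : ∀ᶠ t in l, -C * t ≤ Lx - fstar := by
      have hIoo : ∀ᶠ t in l, t ∈ Set.Ioo (0:ℝ) 1 :=
        Filter.eventually_of_mem (Ioo_mem_nhdsGT_of_mem ⟨le_rfl, one_pos⟩) (fun t ht => ht)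
      filter_upwards [hlow, hIoo] with t hlt ht
      obtain ⟨ht0, ht1⟩ := ht
      -- convexity inequality at xt t
      have hcvx := hLconv.2 (Set.mem_univ xs) (Set.mem_univ x)
          (by linarith : (0:ℝ) ≤ 1 - t) (le_of_lt ht0) (by ring)
      have hxteq : (1 - t) • xs + t • x = xt t := by
        funext i; simp [hxt, hd]; ring
      rw [hxteq] at hcvx
      have hLxs : MvPolynomial.eval xs pf + ∑ i, lams i * MvPolynomial.eval xs (pg i)
          = fstar := by rw [hsumlam, hfstar]; ring
      have hup : MvPolynomial.eval (xt t) pf + ∑ i, lams i * MvPolynomial.eval (xt t) (pg i)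
          ≤ (1 - t) * fstar + t * Lx := by
        simpa [hLxs] using hcvx
      have h2 : (-C * t) * t ≤ (Lx - fstar) * t := by nlinarith
      exact le_of_mul_le_mul_right h2 ht0
    have htend : Filter.Tendsto (fun t : ℝ => -C * t) l (nhds 0) := by
      have : Filter.Tendsto (fun t : ℝ => -C * t) (nhds 0) (nhds (-C * 0)) :=
        (continuous_const.mul continuous_id).tendsto 0
      simpa using this.mono_left nhdsWithin_le_nhds
    have h0le : (0:ℝ) ≤ Lx - fstar := le_of_tendsto htend hfinal
    have hLxs : MvPolynomial.eval xs pf + ∑ i, lams i * MvPolynomial.eval xs (pg i) = fstar := by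
      rw [hsumlam, hfstar]; ring
    rw [ge_iff_le, hLxs]
    linarith
  · -- second saddle inequality
    intro lam hlam
    have h1 : ∑ i, lam i * MvPolynomial.eval xs (pg i) ≤ 0 :=
      Finset.sum_nonpos fun i _ => mul_nonpos_of_nonneg_of_nonpos (hlam i) (hgxs i)
    rw [ge_iff_le, hsumlam]
    linarith
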